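/- Let n ≥ 2, r ∈ {2,...,n−1}, and r/n < λ < 1. The vertices of the (r,n;λ)-hypertruncated cube C'' = conv(C' ∪ {λ·1}), where C' = {x ∈ [0,1]^n : Σ x_i ≤ r}, are exactly the 0/1-vectors e_S for subsets S ⊆ [n] with |S| ≤ r, together with the point λ·1. -/

import Mathlib

lemma htc_extreme_perturb {E : Type*} [AddCommGroup E] [Module ℝ E] {s : Set E} {x d : E}
    (hx : x ∈ Set.extremePoints ℝ s) (h1 : x + d ∈ s) (h2 : x - d ∈ s) : d = 0 := by
  have h : x + d = x := ((mem_extremePoints.1 hx).2 _ h1 _ h2 ⟨1/2, 1/2, by norm_num, by norm_num, by norm_num,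
    by module⟩).1
  linear_combination (norm := abel) h

lemma htc_extreme_C' (n r : ℕ) (x : Fin n → ℝ)
    (hx : x ∈ Set.extremePoints ℝ
      {y : Fin n → ℝ | (∀ i, 0 ≤ y i ∧ y i ≤ 1) ∧ (∑ i, y i) ≤ (r : ℝ)}) :
    ∃ S : Finset (Fin n), S.card ≤ r ∧ x = fun i => if i ∈ S then (1 : ℝ) else 0 := by
  obtain ⟨hbd, hsum⟩ := hx.1
  have key : ∀ i, x i = 0 ∨ x i = 1 := by
    by_contra h
    push_neg at h
    obtain ⟨i, hi0, hi1⟩ := h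
    have hxi0 : 0 < x i := lt_of_le_of_ne (hbd i).1 (Ne.symm hi0)
    have hxi1 : x i < 1 := lt_of_le_of_ne (hbd i).2 hi1
    by_cases hlt : (∑ j, x j) < (r : ℝ)
    · set ε := min (min (x i) (1 - x i)) ((r : ℝ) - ∑ j, x j) with hεdef
      have hε : 0 < ε := lt_min (lt_min hxi0 (by linarith)) (by linarith)
      have hε1 : ε ≤ x i := le_trans (min_le_left _ _) (min_le_left _ _)
      have hε2 : ε ≤ 1 - x i := le_trans (min_le_left _ _) (min_le_right _ _)
      have hε3 : ε ≤ (r : ℝ) - ∑ j, x j := min_le_right _ _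
      set d : Fin n → ℝ := fun k => if k = i then ε else 0 with hddef
      have hdsum : ∑ k, d k = ε := by simp [hddef, Finset.sum_ite_eq']
      have hd : d = 0 := by
        refine htc_extreme_perturb hx ⟨?_, ?_⟩ ⟨?_, ?_⟩
        · intro j
          simp only [Pi.add_apply, hddef]
          by_cases hj : j = i
          · subst hj; rw [if_pos rfl]; constructor <;> linarith
          · simp only [if_neg hj, add_zero]; exact hbd j
        · have : ∑ j, (x + d) j = (∑ j, x j) + ε := by
            simp [Finset.sum_add_distrib, hdsum]
          rw [this]; linarith
        · intro j
          simp only [Pi.sub_apply, hddef]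
          by_cases hj : j = i
          · subst hj; rw [if_pos rfl]; constructor <;> linarith
          · simp only [if_neg hj, sub_zero]; exact hbd j
        · have : ∑ j, (x - d) j = (∑ j, x j) - ε := by
            simp [Finset.sum_sub_distrib, hdsum]
          rw [this]; linarith
      have := congrFun hd i
      simp [hddef] at this
      exact absurd this (ne_of_gt hε)
    · have heq : ∑ j, x j = (r : ℝ) := le_antisymm hsum (not_lt.1 hlt)
      have hexj : ∃ j, j ≠ i ∧ x j ≠ 0 ∧ x j ≠ 1 := by
        by_contra hc
        push_neg at hc
        set T := Finset.univ.filter (fun j => j ≠ i ∧ x j = 1) with hT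
        have hsum2 : ∑ j ∈ Finset.univ.erase i, x j = T.card := by
          rw [Finset.sum_congr rfl (g := fun j => if j ∈ T then (1:ℝ) else 0)]
          · rw [Finset.sum_ite_mem]
            have hTsub : Finset.univ.erase i ∩ T = T := by
              apply Finset.inter_eq_right.2
              intro j hj
              simp only [hT, Finset.mem_filter] at hj
              exact Finset.mem_erase.2 ⟨hj.2.1, Finset.mem_univ j⟩
            rw [hTsub, Finset.sum_const]; simp
          · intro j hj
            have hji : j ≠ i := (Finset.mem_erase.1 hj).1
            by_cases h1 : x j = 1
            · simp [hT, hji, h1]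
            · have h0 : x j = 0 := by
                by_contra h0
                exact h1 (hc j hji h0)
              simp [hT, hji, h1, h0]
        have herase := Finset.sum_erase_add Finset.univ x (Finset.mem_univ i)
        rw [hsum2] at herase
        have hxi : x i = (r : ℝ) - T.card := by
          rw [heq] at herase; linarith
        have h1 : (T.card : ℝ) < r := by rw [hxi] at hxi0; linarith
        have h2 : (r : ℝ) < T.card + 1 := by rw [hxi] at hxi1; linarith
        have h1' : T.card < r := by exact_mod_cast h1
        have h2' : r < T.card + 1 := by exact_mod_cast h2
        omega
      obtain ⟨j, hji, hj0, hj1⟩ := hexj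
      have hxj0 : 0 < x j := lt_of_le_of_ne (hbd j).1 (Ne.symm hj0)
      have hxj1 : x j < 1 := lt_of_le_of_ne (hbd j).2 hj1
      set ε := min (min (x i) (1 - x i)) (min (x j) (1 - x j)) with hεdef
      have hε : 0 < ε := lt_min (lt_min hxi0 (by linarith)) (lt_min hxj0 (by linarith))
      have hε1 : ε ≤ x i := le_trans (min_le_left _ _) (min_le_left _ _)
      have hε2 : ε ≤ 1 - x i := le_trans (min_le_left _ _) (min_le_right _ _)
      have hε3 : ε ≤ x j := le_trans (min_le_right _ _) (min_le_left _ _)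
      have hε4 : ε ≤ 1 - x j := le_trans (min_le_right _ _) (min_le_right _ _)
      have hij : i ≠ j := fun h => hji h.symm
      set d : Fin n → ℝ := fun k => (if k = i then ε else 0) - (if k = j then ε else 0)
        with hddef
      have hdsum : ∑ k, d k = 0 := by
        simp [hddef, Finset.sum_sub_distrib, Finset.sum_ite_eq']
      have hd : d = 0 := by
        refine htc_extreme_perturb hx ⟨?_, ?_⟩ ⟨?_, ?_⟩
        · intro k
          simp only [Pi.add_apply, hddef]
          by_cases hk : k = i
          · subst hk; simp only [if_pos rfl, if_neg hij, if_true, eq_self_iff_true]; constructor <;> (first | linarith | (simp [hij]; linarith))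
          · by_cases hk2 : k = j
            · subst hk2; simp only [if_pos rfl, if_neg hk, if_true, eq_self_iff_true]; constructor <;> (first | linarith | (simp [hk]; linarith))
            · simp only [if_neg hk, if_neg hk2]
              have := hbd k; constructor <;> linarith [this.1, this.2]
        · have : ∑ k, (x + d) k = ∑ k, x k := by
            simp [Finset.sum_add_distrib, hdsum]
          rw [this]; exact hsum
        · intro k
          simp only [Pi.sub_apply, hddef]
          by_cases hk : k = i
          · subst hk; simp only [if_pos rfl, if_neg hij, if_true, eq_self_iff_true]; constructor <;> (first | linarith | (simp [hij]; linarith))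
          · by_cases hk2 : k = j
            · subst hk2; simp only [if_pos rfl, if_neg hk, if_true, eq_self_iff_true]; constructor <;> (first | linarith | (simp [hk]; linarith))
            · simp only [if_neg hk, if_neg hk2]
              have := hbd k; constructor <;> linarith [this.1, this.2]
        · have : ∑ k, (x - d) k = ∑ k, x k := by
            simp [Finset.sum_sub_distrib, hdsum]
          rw [this]; exact hsum
      have := congrFun hd i
      simp [hddef, if_neg hij] at this
      exact absurd this (ne_of_gt hε)
  refine ⟨Finset.univ.filter (fun i => x i = 1), ?_, ?_⟩
  · have hcard : ((Finset.univ.filter (fun i => x i = 1)).card : ℝ) = ∑ i, x i := by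
      rw [← Finset.sum_boole]
      exact Finset.sum_congr rfl fun i _ => by
        rcases key i with h | h <;> simp [h]
    have : ((Finset.univ.filter (fun i => x i = 1)).card : ℝ) ≤ (r : ℝ) := by
      rw [hcard]; exact hsum
    exact_mod_cast this
  · funext i
    simp only [Finset.mem_filter, Finset.mem_univ, true_and]
    rcases key i with h | h <;> simp [h]

lemma htc_Cprime_eq (n r : ℕ) :
    {x : Fin n → ℝ | (∀ i, 0 ≤ x i ∧ x i ≤ 1) ∧ (∑ i, x i) ≤ (r : ℝ)}
      = convexHull ℝ {x : Fin n → ℝ | ∃ S : Finset (Fin n), S.card ≤ r ∧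
          x = fun i => if i ∈ S then (1 : ℝ) else 0} := by
  set C : Set (Fin n → ℝ) :=
    {x | (∀ i, 0 ≤ x i ∧ x i ≤ 1) ∧ (∑ i, x i) ≤ (r : ℝ)} with hC
  set E : Set (Fin n → ℝ) :=
    {x | ∃ S : Finset (Fin n), S.card ≤ r ∧ x = fun i => if i ∈ S then (1 : ℝ) else 0} with hE
  have hconv : Convex ℝ C := by
    intro x hx y hy a b ha hb hab
    refine ⟨fun i => ?_, ?_⟩
    · have h1 := (hx.1 i); have h2 := (hy.1 i)
      constructor
      · have : 0 ≤ a * x i + b * y i := by nlinarith [h1.1, h2.1]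
        simpa using this
      · have : a * x i + b * y i ≤ 1 := by nlinarith [h1.2, h2.2]
        simpa using this
    · have : ∑ i, (a * x i + b * y i) ≤ (r : ℝ) := by
        rw [Finset.sum_add_distrib, ← Finset.mul_sum, ← Finset.mul_sum]
        nlinarith [hx.2, hy.2]
      simpa using this
  have hEsub : E ⊆ C := by
    rintro _ ⟨S, hS, rfl⟩
    refine ⟨fun i => ?_, ?_⟩
    · by_cases h : i ∈ S <;> simp [h]
    · have : ∑ i, (if i ∈ S then (1:ℝ) else 0) = S.card := by
        simp [Finset.sum_ite_mem]
      rw [this]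
      exact_mod_cast hS
  have hEfin : E.Finite := by
    have himg : E = (fun S : Finset (Fin n) =>
        (fun i => if i ∈ S then (1:ℝ) else 0)) '' {S | S.card ≤ r} := by
      ext x
      constructor
      · rintro ⟨S, h1, rfl⟩; exact ⟨S, h1, rfl⟩
      · rintro ⟨S, h1, rfl⟩; exact ⟨S, h1, rfl⟩
    rw [himg]
    exact Set.Finite.image _ (Set.toFinite _)
  have hclosedhalf : IsClosed {x : Fin n → ℝ | ∑ i, x i ≤ (r : ℝ)} :=
    isClosed_le (continuous_finset_sum _ fun i _ => continuous_apply i) continuous_const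
  have hCeq : C = Set.Icc (0 : Fin n → ℝ) 1 ∩ {x | ∑ i, x i ≤ (r : ℝ)} := by
    ext x
    simp [hC, Set.mem_Icc, Pi.le_def, forall_and]
  have hcomp : IsCompact C := by
    rw [hCeq]
    exact isCompact_Icc.inter_right hclosedhalf
  apply le_antisymm ?_ (convexHull_min hEsub hconv)
  have hKM := closure_convexHull_extremePoints hcomp hconv
  have hext : Set.extremePoints ℝ C ⊆ E := by
    intro x hx
    exact htc_extreme_C' n r x hx
  calc C = closure (convexHull ℝ (Set.extremePoints ℝ C)) := hKM.symm
    _ ⊆ closure (convexHull ℝ E) := closure_mono (convexHull_mono hext)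
    _ = convexHull ℝ E := (hEfin.isClosed_convexHull ℝ).closure_eq

/-- Let `n ≥ 2`, `r ∈ {2,…,n−1}`, and `r/n < λ < 1`.  The vertices (extreme
points) of the `(r,n;λ)`-hypertruncated cube `C'' = conv(C' ∪ {λ·𝟙})`, where
`C' = {x ∈ [0,1]ⁿ : Σ xᵢ ≤ r}`, are exactly the 0/1-vectors `e_S` for
`S ⊆ [n]` with `|S| ≤ r`, together with the point `λ·𝟙`. -/
theorem vertices_of_hypertruncated_cube
    (n r : ℕ) (hn : 2 ≤ n) (hr2 : 2 ≤ r) (hrn : r ≤ n - 1)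
    (lam : ℝ) (hlam1 : (r : ℝ) / (n : ℝ) < lam) (hlam2 : lam < 1)
    (C' : Set (Fin n → ℝ))
    (hC' : C' = {x | (∀ i, 0 ≤ x i ∧ x i ≤ 1) ∧ (∑ i, x i) ≤ (r : ℝ)})
    (C'' : Set (Fin n → ℝ))
    (hC'' : C'' = convexHull ℝ (C' ∪ {fun _ => lam})) :
    Set.extremePoints ℝ C''
      = {x | ∃ S : Finset (Fin n), S.card ≤ r ∧
            x = fun i => if i ∈ S then (1 : ℝ) else 0}
        ∪ {fun _ => lam} := by
  set l1 : Fin n → ℝ := fun _ => lam with hl1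
  set E : Set (Fin n → ℝ) := {x | ∃ S : Finset (Fin n), S.card ≤ r ∧
      x = fun i => if i ∈ S then (1 : ℝ) else 0} with hE
  have hn0 : (0 : ℝ) < n := by
    have : 0 < n := by omega
    exact_mod_cast this
  have hr0 : (0 : ℝ) < r := by
    have : 0 < r := by omega
    exact_mod_cast this
  have hlam0 : 0 < lam := lt_trans (div_pos hr0 hn0) hlam1
  have hrlt : (r : ℝ) < lam * n := by
    rw [div_lt_iff₀ hn0] at hlam1; exact hlam1
  have hC''E : C'' = convexHull ℝ (E ∪ {l1}) := by
    rw [hC'', hC', htc_Cprime_eq n r, convexHull_convexHull_union_left]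
  -- C'' is contained in the cube
  have hcubeconv : Convex ℝ {y : Fin n → ℝ | ∀ i, 0 ≤ y i ∧ y i ≤ 1} := by
    intro x hx y hy a b ha hb hab i
    have h1 := hx i; have h2 := hy i
    constructor
    · have : 0 ≤ a * x i + b * y i := by nlinarith [h1.1, h2.1]
      simpa using this
    · have : a * x i + b * y i ≤ 1 := by nlinarith [h1.2, h2.2]
      simpa using this
  have hcube : ∀ y ∈ C'', ∀ i, 0 ≤ y i ∧ y i ≤ 1 := by
    have hsub : C'' ⊆ {y | ∀ i, 0 ≤ y i ∧ y i ≤ 1} := by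
      rw [hC''E]
      apply convexHull_min _ hcubeconv
      rintro y (⟨S, hS, rfl⟩ | hy)
      · intro i; by_cases h : i ∈ S <;> simp [h]
      · rw [Set.mem_singleton_iff] at hy
        subst hy
        intro i
        exact ⟨le_of_lt hlam0, le_of_lt hlam2⟩
    exact fun y hy => hsub hy
  -- the key characterization for l1
  have hEne : E.Nonempty := ⟨fun _ => (0:ℝ), ⟨∅, by simp, by funext i; simp⟩⟩
  have hglin : IsLinearMap ℝ (fun y : Fin n → ℝ => ∑ i, y i) :=
    ⟨fun x y => by simp [Finset.sum_add_distrib],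
     fun c x => by simp [Finset.mul_sum]⟩
  have hgE : ∀ z ∈ convexHull ℝ E, (∑ i, z i) ≤ (r : ℝ) := by
    intro z hz
    refine convexHull_min ?_ (convex_halfSpace_le hglin (r : ℝ)) hz
    rintro _ ⟨S, hS, rfl⟩
    have : ∑ i, (if i ∈ S then (1:ℝ) else 0) = S.card := by
      simp [Finset.sum_ite_mem]
    simp only [Set.mem_setOf_eq]
    rw [this]
    exact_mod_cast hS
  have hgl1 : (∑ i : Fin n, l1 i) = lam * n := by
    simp [hl1, Finset.sum_const, Finset.card_univ, mul_comm]
  have hkey : ∀ y ∈ C'', (∑ i, y i) ≤ lam * n ∧ ((∑ i, y i) = lam * n → y = l1) := by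
    intro y hy
    rw [hC''E, Set.union_comm, ← Set.insert_eq, convexHull_insert hEne,
      mem_convexJoin] at hy
    obtain ⟨u, hu, z, hz, hyz⟩ := hy
    rw [Set.mem_singleton_iff] at hu
    subst hu
    obtain ⟨a, b, ha, hb, hab, hsum⟩ := hyz
    have hgz := hgE z hz
    have hgy : (∑ i, y i) = a * (lam * n) + b * (∑ i, z i) := by
      rw [← hsum]
      simp only [Pi.add_apply, Pi.smul_apply, smul_eq_mul, Finset.sum_add_distrib,
        ← Finset.mul_sum]
      rw [hgl1]
    constructor
    · rw [hgy]; nlinarith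
    · intro heq
      have hb0 : b = 0 := by nlinarith
      have ha1 : a = 1 := by linarith
      rw [← hsum, hb0, ha1]
      funext i
      simp [hl1]
  ext x
  simp only [Set.mem_union, Set.mem_setOf_eq, Set.mem_singleton_iff]
  constructor
  · intro hx
    rw [hC''E] at hx
    have := extremePoints_convexHull_subset hx
    rcases this with h | h
    · exact Or.inl h
    · exact Or.inr h
  · rintro (⟨S, hS, rfl⟩ | rfl)
    · -- e_S is an extreme point
      set eS : Fin n → ℝ := fun i => if i ∈ S then (1:ℝ) else 0 with heS
      have hmem : eS ∈ C'' := by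
        rw [hC''E]
        exact subset_convexHull ℝ _ (Or.inl ⟨S, hS, rfl⟩)
      refine mem_extremePoints.2 ⟨hmem, ?_⟩
      intro x1 hx1 x2 hx2 hseg
      obtain ⟨a, b, ha, hb, hab, hsum⟩ := hseg
      set F : (Fin n → ℝ) → ℝ := fun y => ∑ i, (if i ∈ S then 1 - y i else y i) with hF
      clear_value F
      have hFnn : ∀ y : Fin n → ℝ, (∀ i, 0 ≤ y i ∧ y i ≤ 1) → 0 ≤ F y := by
        intro y hy
        rw [hF]
        apply Finset.sum_nonneg
        intro i _
        by_cases h : i ∈ S <;> simp [h] <;> linarith [(hy i).1, (hy i).2]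
      have hFzero : ∀ y : Fin n → ℝ, (∀ i, 0 ≤ y i ∧ y i ≤ 1) → F y = 0 → y = eS := by
        intro y hy h0
        rw [hF] at h0
        have hterm : ∀ i ∈ Finset.univ, (if i ∈ S then 1 - y i else y i) = 0 := by
          rw [← Finset.sum_eq_zero_iff_of_nonneg]
          · exact h0
          · intro i _
            by_cases h : i ∈ S <;> simp [h] <;> linarith [(hy i).1, (hy i).2]
        funext i
        have := hterm i (Finset.mem_univ i)
        by_cases h : i ∈ S <;> simp [heS, h] at this ⊢ <;> linarith
      have hFeS : F eS = 0 := by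
        rw [hF]
        apply Finset.sum_eq_zero
        intro i _
        by_cases h : i ∈ S <;> simp [heS, h]
      have hFaff : F (a • x1 + b • x2) = a * F x1 + b * F x2 := by
        rw [hF]
        simp only [Finset.mul_sum, ← Finset.sum_add_distrib]
        apply Finset.sum_congr rfl
        intro i _
        simp only [Pi.add_apply, Pi.smul_apply, smul_eq_mul]
        by_cases h : i ∈ S
        · simp only [if_pos h]
          linear_combination -hab
        · simp only [if_neg h]
      rw [hsum, hFeS] at hFaff
      have h1 := hFnn x1 (hcube x1 hx1)
      have h2 := hFnn x2 (hcube x2 hx2)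
      have hF1 : F x1 = 0 := by
        by_contra hc
        have hpos : 0 < F x1 := lt_of_le_of_ne h1 (Ne.symm hc)
        nlinarith [mul_pos ha hpos, mul_nonneg hb.le h2]
      have hF2 : F x2 = 0 := by
        by_contra hc
        have hpos : 0 < F x2 := lt_of_le_of_ne h2 (Ne.symm hc)
        nlinarith [mul_pos hb hpos, mul_nonneg ha.le h1]
      exact ⟨hFzero x1 (hcube x1 hx1) hF1, hFzero x2 (hcube x2 hx2) hF2⟩
    · -- l1 is an extreme point
      have hmem : l1 ∈ C'' := by
        rw [hC''E]
        exact subset_convexHull ℝ _ (Or.inr rfl)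
      refine mem_extremePoints.2 ⟨hmem, ?_⟩
      intro x1 hx1 x2 hx2 hseg
      obtain ⟨a, b, ha, hb, hab, hsum⟩ := hseg
      have hk1 := hkey x1 hx1
      have hk2 := hkey x2 hx2
      have hgsum : a * (∑ i, x1 i) + b * (∑ i, x2 i) = lam * n := by
        rw [← hgl1, ← hsum]
        simp [Finset.sum_add_distrib, Finset.mul_sum]
      have hg1 : (∑ i, x1 i) = lam * n := by
        by_contra hc
        have hlt : (∑ i, x1 i) < lam * n := lt_of_le_of_ne hk1.1 hc
        have habln : a * (lam * n) + b * (lam * n) = lam * n := by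
          rw [← add_mul, hab, one_mul]
        linarith [mul_pos ha (sub_pos.2 hlt), mul_nonneg hb.le (sub_nonneg.2 hk2.1),
          hgsum, habln]
      have hg2 : (∑ i, x2 i) = lam * n := by
        by_contra hc
        have hlt : (∑ i, x2 i) < lam * n := lt_of_le_of_ne hk2.1 hc
        have habln : a * (lam * n) + b * (lam * n) = lam * n := by
          rw [← add_mul, hab, one_mul]
        linarith [mul_pos hb (sub_pos.2 hlt), mul_nonneg ha.le (sub_nonneg.2 hk1.1),
          hgsum, habln]
      exact ⟨hk1.2 hg1, hk2.2 hg2⟩
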